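/- For p > 0 and real x, y > 0, Σ_{m,n≥0} ((p)_{m+n} (-1)^n x^{m+n} / ((p)_m (p)_n)) · L_m^{(p-1)}(y) L_n^{(p-1)}(y) = ₀F₁(; p; -x²y²) = Γ(p) (xy)^{1-p} J_{p-1}(2xy), where the double series converges absolutely for |x| sufficiently small. -/

import Mathlib

/-- Pochhammer symbol `(a)_n`. -/
noncomputable def poch (a : ℝ) (n : ℕ) : ℝ := Polynomial.eval a (ascPochhammer ℝ n)

/-- Generalized Laguerre polynomial. -/
noncomputable def laguerre (a : ℝ) (n : ℕ) (x : ℝ) : ℝ :=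
  ∑ k ∈ Finset.range (n + 1),
    (-1) ^ k * poch (a + k + 1) (n - k) / ((n - k).factorial * k.factorial) * x ^ k

/-- `₀F₁(; b; z)`. -/
noncomputable def F01 (b z : ℝ) : ℝ := ∑' n : ℕ, z ^ n / (poch b n * n.factorial)

/-- Bessel function of the first kind, `J_ν(w) = Σ_k (-1)^k (w/2)^{ν+2k}/(k! Γ(ν+k+1))`. -/
noncomputable def besselJ (ν w : ℝ) : ℝ :=
  ∑' k : ℕ, (-1) ^ k * (w / 2) ^ (ν + 2 * k : ℝ) / (k.factorial * Real.Gamma (ν + k + 1))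

/-- Term of the double series in Exton's corrected result (4.3). -/
noncomputable def exton43Term (p x y : ℝ) (mn : ℕ × ℕ) : ℝ :=
  poch p (mn.1 + mn.2) * (-1) ^ mn.2 * x ^ (mn.1 + mn.2) / (poch p mn.1 * poch p mn.2) *
    laguerre (p - 1) mn.1 y * laguerre (p - 1) mn.2 y


lemma poch_zero (a : ℝ) : poch a 0 = 1 := by simp [poch]

lemma poch_succ (a : ℝ) (n : ℕ) : poch a (n + 1) = poch a n * (a + n) := by
  simp [poch, ascPochhammer_succ_right]

lemma poch_pos {p : ℝ} (hp : 0 < p) (n : ℕ) : 0 < poch p n := by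
  induction n with
  | zero => simp [poch_zero]
  | succ n ih => rw [poch_succ]; positivity

lemma poch_add (p : ℝ) (m n : ℕ) : poch p (m + n) = poch p m * poch (p + m) n := by
  have := congrArg (Polynomial.eval p) (ascPochhammer_mul ℝ m n)
  simpa [poch, Polynomial.eval_comp] using this.symm

noncomputable def ee (p : ℝ) (j : ℕ) : ℝ := ((j.factorial : ℝ) * poch p j)⁻¹

lemma ee_pos {p : ℝ} (hp : 0 < p) (j : ℕ) : 0 < ee p j := by
  have h1 := poch_pos hp j
  have h2 : (0:ℝ) < j.factorial := by positivity
  rw [ee]; positivity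

lemma ee_ne_zero {p : ℝ} (hp : 0 < p) (j : ℕ) : ee p j ≠ 0 := (ee_pos hp j).ne'

lemma ee_zero (p : ℝ) : ee p 0 = 1 := by simp [ee, poch_zero]

lemma ee_succ (p : ℝ) (j : ℕ) : ee p (j+1) = ee p j * (((j:ℝ)+1) * (p+j))⁻¹ := by
  rw [ee, ee, ← mul_inv]
  congr 1
  rw [Nat.factorial_succ, poch_succ]
  push_cast
  ring

noncomputable def Sb (p : ℝ) (s : ℕ) : ℝ :=
  ∑ j ∈ Finset.range (s+1), (-1)^j * ee p j * ee p (s - j)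


lemma Sb_odd (p : ℝ) (t : ℕ) : Sb p (2*t+1) = 0 := by
  have key : Sb p (2*t+1) = - Sb p (2*t+1) := by
    conv_lhs => rw [Sb, ← Finset.sum_range_reflect]
    rw [Sb, ← Finset.sum_neg_distrib]
    apply Finset.sum_congr rfl
    intro j hj
    have hj' : j ≤ 2*t+1 := by simpa using Nat.lt_succ_iff.mp (Finset.mem_range.mp hj)
    have e0 : 2*t+1+1-1-j = 2*t+1-j := by omega
    have e1 : 2*t+1-(2*t+1-j) = j := by omega
    rw [e0, e1]
    have e2 : ((-1:ℝ))^(2*t+1-j) = -(-1)^j := by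
      have h : (-1:ℝ)^(2*t+1-j) * (-1)^j = (-1)^(2*t+1) := by
        rw [← pow_add]; congr 1; omega
      have h2 : ((-1:ℝ))^(2*t+1) = -1 := Odd.neg_one_pow ⟨t, by ring⟩
      have h3 : ((-1:ℝ))^j * (-1)^j = 1 := by
        rw [← mul_pow]; norm_num
      calc (-1:ℝ)^(2*t+1-j) = ((-1)^(2*t+1-j) * (-1)^j) * (-1)^j := by
              rw [mul_assoc, h3, mul_one]
        _ = -(-1)^j := by rw [h, h2]; ring
    rw [e2]; ring
  linarith


noncomputable def Fc (p : ℝ) (t j : ℕ) : ℝ :=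
  if j ≤ 2*t then (-1)^j * ee p j * ee p (2*t - j) else 0
noncomputable def Gc (p : ℝ) (t j : ℕ) : ℝ :=
  Fc p (t+1) j * ((j:ℝ) * (p + j - 1) * (-(1:ℝ)/2) *
    ((j:ℝ)^2 - (6*(t:ℝ)+2*p+3)*(j:ℝ) + (10*(t:ℝ)^2+(7*p+10)*(t:ℝ)+p^2+4*p+2)))

lemma cert {p : ℝ} (hp : 0 < p) (t j : ℕ) :
    ((t:ℝ)+1)*(p+t)*(p+2*t)*(p+2*t+1) * Fc p (t+1) j + Fc p t j
      = Gc p t (j+1) - Gc p t j := by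
  by_cases h1 : j ≤ 2*t
  · -- generic case
    have h2 : j ≤ 2*(t+1) := by omega
    have h3 : j+1 ≤ 2*(t+1) := by omega
    have e1 : 2*(t+1) - j = ((2*t-j) + 1) + 1 := by omega
    have e2 : 2*(t+1) - (j+1) = (2*t-j) + 1 := by omega
    simp only [Fc, Gc, h1, h2, h3, if_true, e1, e2]
    rw [ee_succ p ((2*t-j)+1), ee_succ p (2*t-j), ee_succ p j]
    have hc : ((2*t-j:ℕ):ℝ) = 2*(t:ℝ)-(j:ℝ) := by
      rw [Nat.cast_sub h1]; push_cast; ring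
    push_cast
    simp only [hc]
    have htj : (0:ℝ) ≤ 2*(t:ℝ)-(j:ℝ) := by rw [← hc]; exact Nat.cast_nonneg _
    have hj0 : (0:ℝ) ≤ (j:ℝ) := Nat.cast_nonneg j
    have ht0 : (0:ℝ) ≤ (t:ℝ) := Nat.cast_nonneg t
    have hA : ee p j ≠ 0 := ee_ne_zero hp j
    have hB : ee p (2*t-j) ≠ 0 := ee_ne_zero hp _
    have n1 : (j:ℝ)+1 ≠ 0 := by positivity
    have n2 : p+(j:ℝ) ≠ 0 := by positivity
    have n3 : 2*(t:ℝ)-(j:ℝ)+1 ≠ 0 := by nlinarith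
    have n4 : 2*(t:ℝ)-(j:ℝ)+1+1 ≠ 0 := by nlinarith
    have n5 : p+(2*(t:ℝ)-(j:ℝ)) ≠ 0 := by nlinarith
    have n6 : p+(2*(t:ℝ)-(j:ℝ)+1) ≠ 0 := by nlinarith
    generalize hu : 2*(t:ℝ)-(j:ℝ) = u at *
    field_simp
    rw [show (j:ℝ) = 2*t-u by linarith]
    ring
  · by_cases h2 : j = 2*t+1
    · subst h2
      have c1 : ¬(2*t+1 ≤ 2*t) := by omega
      have c2 : 2*t+1 ≤ 2*(t+1) := by omega
      have c3 : 2*t+1+1 ≤ 2*(t+1) := by omega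
      have e1 : 2*(t+1) - (2*t+1) = 0 + 1 := by omega
      have e2 : 2*(t+1) - (2*t+1+1) = 0 := by omega
      simp only [Fc, Gc, c1, c2, c3, if_true, if_false, e1, e2]
      rw [ee_succ p 0, ee_zero, ee_succ p (2*t+1), pow_succ]
      push_cast
      have hE : ee p (2*t+1) ≠ 0 := ee_ne_zero hp _
      have ht0 : (0:ℝ) ≤ (t:ℝ) := Nat.cast_nonneg t
      have n1 : p ≠ 0 := hp.ne'
      have n2 : p + (2*(t:ℝ)+1) ≠ 0 := by positivity
      have n3 : (2*(t:ℝ)+1+1) ≠ 0 := by positivity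
      have n4 : (2*(t:ℝ)+2) ≠ 0 := by positivity
      have n5 : p + 2*(t:ℝ)+1 ≠ 0 := by positivity
      field_simp
      ring
    · by_cases h3 : j = 2*t+2
      · subst h3
        have c1 : ¬(2*t+2 ≤ 2*t) := by omega
        have c2 : 2*t+2 ≤ 2*(t+1) := by omega
        have c3 : ¬(2*t+2+1 ≤ 2*(t+1)) := by omega
        have e1 : 2*(t+1) - (2*t+2) = 0 := by omega
        simp only [Fc, Gc, c1, c2, c3, if_true, if_false, e1, ee_zero]
        push_cast
        ring
      · have c1 : ¬(j ≤ 2*t) := h1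
        have c2 : ¬(j ≤ 2*(t+1)) := by omega
        have c3 : ¬(j+1 ≤ 2*(t+1)) := by omega
        simp only [Fc, Gc, c1, c2, c3, if_false]
        ring

lemma Sb_eq_sum_Fc (p : ℝ) (t : ℕ) :
    Sb p (2*t) = ∑ j ∈ Finset.range (2*t+1), Fc p t j := by
  apply Finset.sum_congr rfl
  intro j hj
  rw [Fc, if_pos (by simpa using Nat.lt_succ_iff.mp (Finset.mem_range.mp hj))]

lemma sum_Fc_ext (p : ℝ) (t : ℕ) :
    ∑ j ∈ Finset.range (2*t+3), Fc p t j = Sb p (2*t) := by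
  rw [show 2*t+3 = (2*t+2)+1 from by omega, Finset.sum_range_succ,
    show 2*t+2 = (2*t+1)+1 from by omega, Finset.sum_range_succ]
  rw [Fc, if_neg (by omega), Fc, if_neg (by omega), Sb_eq_sum_Fc]
  ring

lemma Sb_even {p : ℝ} (hp : 0 < p) (t : ℕ) :
    Sb p (2*t) = (-1)^t * (((t.factorial : ℝ) * poch p t * poch p (2*t))⁻¹) := by
  induction t with
  | zero => simp [Sb, ee_zero, poch_zero]
  | succ t ih =>
    set c : ℝ := ((t:ℝ)+1)*(p+t)*(p+2*t)*(p+2*t+1) with hcdef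
    have H : c * Sb p (2*(t+1)) + Sb p (2*t) = Gc p t (2*t+3) - Gc p t 0 := by
      have h1 : Sb p (2*(t+1)) = ∑ j ∈ Finset.range (2*t+3), Fc p (t+1) j := by
        rw [Sb_eq_sum_Fc p (t+1), show 2*(t+1)+1 = 2*t+3 from by omega]
      rw [h1, ← sum_Fc_ext p t, Finset.mul_sum, ← Finset.sum_add_distrib,
        ← Finset.sum_range_sub (fun j => Gc p t j) (2*t+3)]
      exact Finset.sum_congr rfl fun j _ => cert hp t j
    have hG0 : Gc p t 0 = 0 := by simp [Gc]
    have hG1 : Gc p t (2*t+3) = 0 := by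
      rw [Gc, Fc, if_neg (by omega)]; ring
    rw [hG0, hG1, ih] at H
    have hc : c ≠ 0 := by
      have ht0 : (0:ℝ) ≤ (t:ℝ) := Nat.cast_nonneg t
      positivity
    have hfac : (0:ℝ) < t.factorial := by positivity
    have hp1 : (0:ℝ) < poch p t := poch_pos hp t
    have hp2 : (0:ℝ) < poch p (2*t) := poch_pos hp (2*t)
    have e1 : (t+1).factorial = (t+1) * t.factorial := Nat.factorial_succ t
    have e2 : poch p (t+1) = poch p t * (p + t) := poch_succ p t
    have e3 : poch p (2*(t+1)) = poch p (2*t) * (p + 2*t) * (p + (2*t) + 1) := by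
      rw [show 2*(t+1) = ((2*t)+1)+1 from by omega, poch_succ, poch_succ]
      push_cast; ring
    have goal : Sb p (2*(t+1)) = (-1)^(t+1) * ((((t+1).factorial : ℝ) * poch p (t+1) * poch p (2*(t+1)))⁻¹) := by
      have hSb : Sb p (2*(t+1)) = -((-1)^t * (((t.factorial : ℝ) * poch p t * poch p (2*t))⁻¹)) / c := by
        field_simp at H ⊢
        linarith [H]
      rw [hSb, e1, e2, e3, hcdef]
      push_cast
      field_simp
      ring
    exact goal

lemma lag_eq {p : ℝ} (hp : 0 < p) (y : ℝ) (n : ℕ) :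
    laguerre (p-1) n y
      = poch p n * ∑ k ∈ Finset.range (n+1), (-y)^k * ee p k * (((n-k).factorial:ℝ))⁻¹ := by
  rw [laguerre, Finset.mul_sum]
  apply Finset.sum_congr rfl
  intro k hk
  have hk' : k ≤ n := Nat.lt_succ_iff.mp (Finset.mem_range.mp hk)
  have harg : p - 1 + (k:ℝ) + 1 = p + k := by ring
  have hsplit : poch p n = poch p k * poch (p + k) (n - k) := by
    rw [← poch_add]; congr 1; omega
  rw [harg, hsplit, ee, neg_pow]
  have h1 : ((k.factorial : ℝ)) ≠ 0 := by positivity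
  have h2 : (((n-k).factorial : ℝ)) ≠ 0 := by positivity
  have h3 : poch p k ≠ 0 := (poch_pos hp k).ne'
  field_simp
  ring

noncomputable def psA (p y : ℝ) : PowerSeries ℝ := PowerSeries.mk fun j => (-y)^j * ee p j
noncomputable def psB (p y : ℝ) : PowerSeries ℝ := PowerSeries.mk fun k => y^k * ee p k
noncomputable def psE1 : PowerSeries ℝ := PowerSeries.mk fun a => ((a.factorial:ℝ))⁻¹
noncomputable def psE2 : PowerSeries ℝ := PowerSeries.mk fun b => (-1)^b * ((b.factorial:ℝ))⁻¹

lemma psE_mul : psE1 * psE2 = 1 := by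
  ext n
  rw [PowerSeries.coeff_mul, PowerSeries.coeff_one]
  simp only [psE1, psE2, PowerSeries.coeff_mk]
  rw [Finset.Nat.sum_antidiagonal_eq_sum_range_succ_mk]
  rcases Nat.eq_zero_or_pos n with hn | hn
  · subst hn; simp
  · rw [if_neg hn.ne']
    have key : ∀ i ∈ Finset.range (n+1),
        (i.factorial:ℝ)⁻¹ * ((-1)^(n-i) * (((n-i).factorial:ℝ))⁻¹)
          = (1:ℝ)^i * (-1)^(n-i) * (n.choose i : ℝ) * ((n.factorial:ℝ))⁻¹ := by
      intro i hi
      have hi' : i ≤ n := Nat.lt_succ_iff.mp (Finset.mem_range.mp hi)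
      have hc := Nat.choose_mul_factorial_mul_factorial hi'
      have hc' : ((n.choose i : ℝ)) * (i.factorial:ℝ) * (((n-i).factorial:ℝ)) = (n.factorial:ℝ) := by
        exact_mod_cast congrArg (Nat.cast : ℕ → ℝ) hc
      have h1 : ((i.factorial:ℝ)) ≠ 0 := by positivity
      have h2 : (((n-i).factorial:ℝ)) ≠ 0 := by positivity
      have h3 : ((n.factorial:ℝ)) ≠ 0 := by positivity
      have key2 : (i.factorial:ℝ)⁻¹ * (((n-i).factorial:ℝ))⁻¹
          = (n.choose i : ℝ) * ((n.factorial:ℝ))⁻¹ := by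
        field_simp
        linarith [hc']
      calc (i.factorial:ℝ)⁻¹ * ((-1)^(n-i) * (((n-i).factorial:ℝ))⁻¹)
          = (-1)^(n-i) * ((i.factorial:ℝ)⁻¹ * (((n-i).factorial:ℝ))⁻¹) := by ring
        _ = (-1)^(n-i) * ((n.choose i : ℝ) * ((n.factorial:ℝ))⁻¹) := by rw [key2]
        _ = (1:ℝ)^i * (-1)^(n-i) * (n.choose i : ℝ) * ((n.factorial:ℝ))⁻¹ := by ring
    rw [Finset.sum_congr rfl key]
    have hbin : ∑ i ∈ Finset.range (n+1), (1:ℝ)^i * (-1)^(n-i) * (n.choose i : ℝ)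
        = ((1 + (-1):ℝ))^n := (add_pow (1:ℝ) (-1) n).symm
    rw [← Finset.sum_mul, hbin]
    rw [show ((1 + (-1):ℝ)) = 0 from by ring, zero_pow hn.ne']
    ring

lemma coeffU {p : ℝ} (hp : 0 < p) (y : ℝ) (n : ℕ) :
    poch p n * PowerSeries.coeff n (psA p y * psE1) = laguerre (p-1) n y := by
  rw [PowerSeries.coeff_mul, Finset.Nat.sum_antidiagonal_eq_sum_range_succ_mk,
    lag_eq hp y n]
  simp only [psA, psE1, PowerSeries.coeff_mk]

lemma coeffV {p : ℝ} (hp : 0 < p) (y : ℝ) (n : ℕ) :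
    poch p n * PowerSeries.coeff n (psB p y * psE2) = (-1)^n * laguerre (p-1) n y := by
  rw [PowerSeries.coeff_mul, Finset.Nat.sum_antidiagonal_eq_sum_range_succ_mk,
    lag_eq hp y n]
  simp only [psB, psE2, PowerSeries.coeff_mk]
  rw [Finset.mul_sum, Finset.mul_sum, Finset.mul_sum]
  apply Finset.sum_congr rfl
  intro i hi
  have hi' : i ≤ n := Nat.lt_succ_iff.mp (Finset.mem_range.mp hi)
  have hsgn : (-1:ℝ)^(n-i) = (-1)^n * (-1)^i := by
    have h : (-1:ℝ)^(n-i) * (-1)^i = (-1)^n := by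
      rw [← pow_add]; congr 1; omega
    have h3 : ((-1:ℝ))^i * (-1)^i = 1 := by rw [← mul_pow]; norm_num
    calc (-1:ℝ)^(n-i) = ((-1)^(n-i) * (-1)^i) * (-1)^i := by
          rw [mul_assoc, h3, mul_one]
      _ = (-1)^n * (-1)^i := by rw [h]
  rw [hsgn, neg_pow]
  ring

lemma coeffAB (p y : ℝ) (s : ℕ) :
    PowerSeries.coeff s (psA p y * psB p y) = y^s * Sb p s := by
  rw [PowerSeries.coeff_mul, Finset.Nat.sum_antidiagonal_eq_sum_range_succ_mk, Sb,
    Finset.mul_sum]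
  apply Finset.sum_congr rfl
  intro i hi
  have hi' : i ≤ s := Nat.lt_succ_iff.mp (Finset.mem_range.mp hi)
  simp only [psA, psB, PowerSeries.coeff_mk]
  have hyy : y^i * y^(s-i) = y^s := by rw [← pow_add]; congr 1; omega
  rw [neg_pow]
  calc (-1:ℝ)^i * y^i * ee p i * (y^(s-i) * ee p (s-i))
      = (-1)^i * ee p i * ee p (s-i) * (y^i * y^(s-i)) := by ring
    _ = y^s * ((-1)^i * ee p i * ee p (s-i)) := by rw [hyy]; ring

lemma antidiag_sum {p : ℝ} (hp : 0 < p) (x y : ℝ) (s : ℕ) :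
    ∑ mn ∈ Finset.HasAntidiagonal.antidiagonal s, exton43Term p x y mn
      = poch p s * x^s * (y^s * Sb p s) := by
  have hUV : (psA p y * psE1) * (psB p y * psE2) = psA p y * psB p y := by
    have h : (psA p y * psE1) * (psB p y * psE2) = (psA p y * psB p y) * (psE1 * psE2) := by
      ring
    rw [h, psE_mul, mul_one]
  calc ∑ mn ∈ Finset.HasAntidiagonal.antidiagonal s, exton43Term p x y mn
      = ∑ mn ∈ Finset.HasAntidiagonal.antidiagonal s, poch p s * x^s *
          (PowerSeries.coeff mn.1 (psA p y * psE1) *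
            PowerSeries.coeff mn.2 (psB p y * psE2)) := by
        apply Finset.sum_congr rfl
        intro mn hmn
        have hs : mn.1 + mn.2 = s := Finset.HasAntidiagonal.mem_antidiagonal.mp hmn
        have hp1 : poch p mn.1 ≠ 0 := (poch_pos hp _).ne'
        have hp2 : poch p mn.2 ≠ 0 := (poch_pos hp _).ne'
        have hL1 : laguerre (p-1) mn.1 y
            = poch p mn.1 * PowerSeries.coeff mn.1 (psA p y * psE1) := (coeffU hp y mn.1).symm
        have hsq : (-1:ℝ)^mn.2 * (-1)^mn.2 = 1 := by rw [← mul_pow]; norm_num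
        have hL2 : laguerre (p-1) mn.2 y
            = (-1)^mn.2 * (poch p mn.2 * PowerSeries.coeff mn.2 (psB p y * psE2)) := by
          rw [coeffV hp y mn.2, ← mul_assoc, hsq, one_mul]
        rw [exton43Term, hs, hL1, hL2]
        field_simp
        linear_combination (poch p s * x ^ s *
          ((PowerSeries.coeff mn.1) (psA p y * psE1)) *
          ((PowerSeries.coeff mn.2) (psB p y * psE2))) * hsq
    _ = poch p s * x^s *
          PowerSeries.coeff s ((psA p y * psE1) * (psB p y * psE2)) := by
        rw [PowerSeries.coeff_mul, Finset.mul_sum]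
    _ = poch p s * x^s * (y^s * Sb p s) := by rw [hUV, coeffAB]

lemma part1 {p x y : ℝ} (hp : 0 < p) (hsum : Summable (exton43Term p x y)) :
    (∑' mn : ℕ × ℕ, exton43Term p x y mn) = F01 p (-(x ^ 2 * y ^ 2)) := by
  classical
  set f := exton43Term p x y with hf
  have key : (∑' mn : ℕ × ℕ, f mn) = ∑' s : ℕ, ∑ mn ∈ Finset.HasAntidiagonal.antidiagonal s, f mn := by
    have hsig : Summable (f ∘ (Finset.HasAntidiagonal.sigmaAntidiagonalEquivProd (A := ℕ))) :=
      (Finset.HasAntidiagonal.sigmaAntidiagonalEquivProd.summable_iff).mpr hsum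
    calc (∑' mn : ℕ × ℕ, f mn)
        = ∑' z : (Σ s : ℕ, (Finset.HasAntidiagonal.antidiagonal s : Finset (ℕ×ℕ))),
            f (Finset.HasAntidiagonal.sigmaAntidiagonalEquivProd z) :=
          (Finset.HasAntidiagonal.sigmaAntidiagonalEquivProd.tsum_eq f).symm
      _ = ∑' (s : ℕ) (c : (Finset.HasAntidiagonal.antidiagonal s : Finset (ℕ×ℕ))), f c := by
          exact Summable.tsum_sigma' (fun s => (hasSum_fintype _).summable) hsig
      _ = ∑' s : ℕ, ∑ mn ∈ Finset.HasAntidiagonal.antidiagonal s, f mn := by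
          exact tsum_congr fun s => Finset.tsum_subtype (Finset.HasAntidiagonal.antidiagonal s) f
  rw [key, tsum_congr (fun s => antidiag_sum hp x y s)]
  have hg : ∀ s, s ∉ Set.range (fun t : ℕ => 2*t) →
      poch p s * x^s * (y^s * Sb p s) = 0 := by
    intro s hs
    have hodd : ∃ t, s = 2*t+1 := by
      rcases Nat.even_or_odd s with he | ho
      · obtain ⟨r, hr⟩ := he
        exact absurd ⟨r, show 2*r = s by omega⟩ hs
      · obtain ⟨r, hr⟩ := ho
        exact ⟨r, by omega⟩
    obtain ⟨t, rfl⟩ := hodd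
    rw [Sb_odd]
    ring
  have hinj : Function.Injective (fun t : ℕ => 2*t) := fun a b h => by
    have h' : 2*a = 2*b := h
    omega
  have hsupp : Function.support (fun s => poch p s * x^s * (y^s * Sb p s))
      ⊆ Set.range (fun t : ℕ => 2*t) := by
    intro s hs
    by_contra hr
    exact hs (hg s hr)
  rw [← Function.Injective.tsum_eq hinj hsupp, F01]
  apply tsum_congr
  intro t
  have hfac : ((t.factorial : ℝ)) ≠ 0 := by positivity
  have hp1 : poch p t ≠ 0 := (poch_pos hp _).ne'
  have hp2 : poch p (2*t) ≠ 0 := (poch_pos hp _).ne'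
  rw [Sb_even hp]
  have hz : (-(x ^ 2 * y ^ 2))^t = (-1)^t * x^(2*t) * y^(2*t) := by
    rw [neg_pow, mul_pow, ← pow_mul, ← pow_mul]
    ring
  rw [hz]
  field_simp

lemma Gamma_poch {p : ℝ} (hp : 0 < p) (k : ℕ) :
    Real.Gamma (p + k) = poch p k * Real.Gamma p := by
  induction k with
  | zero => simp [poch_zero]
  | succ k ih =>
    have hpk : p + (k:ℝ) ≠ 0 := by
      have : (0:ℝ) ≤ (k:ℝ) := Nat.cast_nonneg k
      linarith
    have e : p + ((k+1 : ℕ):ℝ) = (p + k) + 1 := by push_cast; ring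
    rw [e, Real.Gamma_add_one hpk, ih, poch_succ]
    ring

lemma part2 {p x y : ℝ} (hp : 0 < p) (hx : 0 < x) (hy : 0 < y) :
    F01 p (-(x ^ 2 * y ^ 2)) =
      Real.Gamma p * (x * y) ^ ((1 : ℝ) - p) * besselJ (p - 1) (2 * x * y) := by
  have hw : 0 < x * y := by positivity
  have hG : Real.Gamma p ≠ 0 := (Real.Gamma_pos_of_pos hp).ne'
  have hA : (x*y) ^ ((1:ℝ) - p) ≠ 0 := (Real.rpow_pos_of_pos hw _).ne'
  rw [besselJ, F01, ← tsum_mul_left]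
  apply tsum_congr
  intro n
  have e1 : 2*x*y/2 = x*y := by ring
  have e2 : p - 1 + (n:ℝ) + 1 = p + n := by ring
  rw [e1, e2, Gamma_poch hp n]
  have e4 : (x*y) ^ ((1:ℝ)-p) * (x*y) ^ (p-1+2*(n:ℝ)) = ((x*y)^2)^n := by
    rw [← Real.rpow_add hw, show (1:ℝ)-p + (p-1+2*(n:ℝ)) = ((2*n : ℕ):ℝ) from by push_cast; ring,
      Real.rpow_natCast, pow_mul]
  have e5 : (x*y) ^ (p-1+2*(n:ℝ)) = ((x*y)^2)^n / (x*y) ^ ((1:ℝ)-p) := by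
    rw [eq_div_iff hA, mul_comm]
    exact e4
  rw [e5]
  have hz : (-(x ^ 2 * y ^ 2))^n = (-1)^n * ((x*y)^2)^n := by
    rw [neg_pow, mul_pow]
    ring
  rw [hz]
  have hfac : ((n.factorial : ℝ)) ≠ 0 := by positivity
  have hp1 : poch p n ≠ 0 := (poch_pos hp _).ne'
  field_simp

theorem exton_4_3_corrected (p x y : ℝ) (hp : 0 < p) (hx : 0 < x) (hy : 0 < y)
    (hsum : Summable (exton43Term p x y)) :
    (∑' mn : ℕ × ℕ, exton43Term p x y mn) = F01 p (-(x ^ 2 * y ^ 2)) ∧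
      F01 p (-(x ^ 2 * y ^ 2)) =
        Real.Gamma p * (x * y) ^ ((1 : ℝ) - p) * besselJ (p - 1) (2 * x * y) :=
  ⟨part1 hp hsum, part2 hp hx hy⟩
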